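/- For every h > 0 and every ω ∈ ℝ, the quantity E(h, ω) = (1/(4π²ω² + 1)²)·(4π²ω² + 1 − 2(1 + e^{2h} − 2e^{h}cos(2πωh))/(h(e^{2h} − 1))) is nonnegative. -/
import Mathlib

lemma sinh_le_mul_cosh {t : ℝ} (ht : 0 ≤ t) : Real.sinh t ≤ t * Real.cosh t := by
  have mono : MonotoneOn (fun x : ℝ => x * Real.cosh x - Real.sinh x) (Set.Ici 0) := by
    apply monotoneOn_of_deriv_nonneg (convex_Ici 0)
    · fun_prop
    · intro x hx
      apply DifferentiableAt.differentiableWithinAt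
      fun_prop
    · intro x hx
      simp only [interior_Ici, Set.mem_Ioi] at hx
      have : deriv (fun x : ℝ => x * Real.cosh x - Real.sinh x) x
          = x * Real.sinh x := by
        have h1 : HasDerivAt (fun x : ℝ => x * Real.cosh x - Real.sinh x)
            (1 * Real.cosh x + x * Real.sinh x - Real.cosh x) x := by
          exact ((hasDerivAt_id x).mul (Real.hasDerivAt_cosh x)).sub
            (Real.hasDerivAt_sinh x)
        rw [h1.deriv]; ring
      rw [this]
      exact mul_nonneg hx.le (Real.sinh_nonneg_iff.2 hx.le)
  have := mono (Set.self_mem_Ici) (Set.mem_Ici.2 ht) ht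
  simpa using this

theorem error_norm_sq_nonneg (h ω : ℝ) (hh : 0 < h) :
    0 ≤ (1 / (4 * Real.pi ^ 2 * ω ^ 2 + 1) ^ 2) *
        (4 * Real.pi ^ 2 * ω ^ 2 + 1 -
          2 * (1 + Real.exp (2 * h) - 2 * Real.exp h * Real.cos (2 * Real.pi * ω * h))
            / (h * (Real.exp (2 * h) - 1))) := by
  have hpi := Real.pi_pos
  set a : ℝ := 2 * Real.pi * ω with ha
  have hP : (0:ℝ) < 4 * Real.pi ^ 2 * ω ^ 2 + 1 := by positivity
  have hexp : Real.exp (2 * h) = Real.exp h * Real.exp h := by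
    rw [← Real.exp_add]; ring_nf
  have he1 : (1:ℝ) < Real.exp h := by nlinarith [Real.add_one_le_exp h]
  have hD : (0:ℝ) < h * (Real.exp (2 * h) - 1) := by
    apply mul_pos hh; rw [hexp]; nlinarith
  -- inequality (i): 2 * (exp h - 1)^2 ≤ h * (exp (2h) - 1)
  have hi : 2 * (Real.exp h - 1) ^ 2 ≤ h * (Real.exp (2 * h) - 1) := by
    have key := sinh_le_mul_cosh (t := h / 2) (by linarith)
    rw [Real.sinh_eq, Real.cosh_eq] at key
    have e2 : Real.exp (h / 2) * Real.exp (h / 2) = Real.exp h := by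
      rw [← Real.exp_add]; ring_nf
    have em : Real.exp (-(h / 2)) * Real.exp (h / 2) = 1 := by
      rw [← Real.exp_add]; simp
    have hep : (0:ℝ) < Real.exp (h / 2) := Real.exp_pos _
    -- multiply key by exp(h/2)
    have key2 : Real.exp h - 1 ≤ h / 2 * (Real.exp h + 1) := by
      have := mul_le_mul_of_nonneg_right key hep.le
      nlinarith [this, e2, em]
    rw [hexp]
    nlinarith [key2, he1]
  -- inequality (ii): 2 * h * exp h ≤ exp (2h) - 1
  have hii : 2 * h * Real.exp h ≤ Real.exp (2 * h) - 1 := by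
    have key : h ≤ Real.sinh h := (Real.self_lt_sinh_iff.2 hh).le
    rw [Real.sinh_eq] at key
    have em : Real.exp (-h) * Real.exp h = 1 := by rw [← Real.exp_add]; simp
    have hep : (0:ℝ) < Real.exp h := Real.exp_pos _
    have := mul_le_mul_of_nonneg_right key hep.le
    rw [hexp]
    nlinarith [this, em]
  -- cosine bound
  have hcos : 1 - (a * h) ^ 2 / 2 ≤ Real.cos (a * h) := Real.one_sub_sq_div_two_le_cos
  have hcos1 : Real.cos (a * h) ≤ 1 := Real.cos_le_one _
  have hep : (0:ℝ) < Real.exp h := Real.exp_pos _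
  -- main: 2 * A ≤ P * D
  have main : 2 * (1 + Real.exp (2 * h) - 2 * Real.exp h * Real.cos (a * h))
      ≤ (4 * Real.pi ^ 2 * ω ^ 2 + 1) * (h * (Real.exp (2 * h) - 1)) := by
    have hA : 1 + Real.exp (2 * h) - 2 * Real.exp h * Real.cos (a * h)
        = (Real.exp h - 1) ^ 2 + 2 * Real.exp h * (1 - Real.cos (a * h)) := by
      rw [hexp]; ring
    have h2 : 2 * Real.exp h * (1 - Real.cos (a * h)) ≤ Real.exp h * (a * h) ^ 2 := by
      nlinarith [hcos, hep]
    have h3 : 2 * (Real.exp h * (a * h) ^ 2) ≤ a ^ 2 * (h * (Real.exp (2 * h) - 1)) := by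
      have : a ^ 2 * h * (2 * h * Real.exp h) ≤ a ^ 2 * h * (Real.exp (2 * h) - 1) := by
        apply mul_le_mul_of_nonneg_left hii
        positivity
      nlinarith [this]
    have ha2 : a ^ 2 = 4 * Real.pi ^ 2 * ω ^ 2 := by rw [ha]; ring
    nlinarith [hi, h2, h3]
  apply mul_nonneg
  · positivity
  · rw [sub_nonneg, div_le_iff₀ hD]
    calc 2 * (1 + Real.exp (2 * h) - 2 * Real.exp h * Real.cos (2 * Real.pi * ω * h))
        = 2 * (1 + Real.exp (2 * h) - 2 * Real.exp h * Real.cos (a * h)) := by rw [ha]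
      _ ≤ (4 * Real.pi ^ 2 * ω ^ 2 + 1) * (h * (Real.exp (2 * h) - 1)) := main
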